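/- If f : I → ℝ solves the restricted Cauchy equation f(x+x') = f(x) + f(x') for all x, x', x+x' ∈ I, and f is continuous at a point, then there exists c ∈ ℝ such that f(x) = c·x for all x ∈ I. -/

import Mathlib

section aux
variable (I : Set ℝ) (f : ℝ → ℝ)

lemma natmul_nonneg (hI : I.OrdConnected) (h0 : (0:ℝ) ∈ I)
    (hadd : ∀ x ∈ I, ∀ x' ∈ I, x + x' ∈ I → f (x + x') = f x + f x')
    (f0 : f 0 = 0) :
    ∀ n : ℕ, ∀ t : ℝ, 0 ≤ t → t ∈ I → (n:ℝ) * t ∈ I → f ((n:ℝ) * t) = n * f t := by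
  intro n
  induction n with
  | zero => intro t _ _ _; simpa using f0
  | succ n ih =>
    intro t ht htI hntI
    push_cast at hntI ⊢
    have hmem : (n:ℝ) * t ∈ I := by
      apply hI.out h0 hntI
      constructor
      · positivity
      · nlinarith
    have hsum : (n:ℝ) * t + t ∈ I := by convert hntI using 1; ring
    have h1 := hadd ((n:ℝ)*t) hmem t htI hsum
    have h2 := ih t ht htI hmem
    have he : ((n:ℝ)+1) * t = (n:ℝ)*t + t := by ring
    rw [he, h1, h2]; ring

lemma natmul_nonpos (hI : I.OrdConnected) (h0 : (0:ℝ) ∈ I)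
    (hadd : ∀ x ∈ I, ∀ x' ∈ I, x + x' ∈ I → f (x + x') = f x + f x')
    (f0 : f 0 = 0) :
    ∀ n : ℕ, ∀ t : ℝ, t ≤ 0 → t ∈ I → (n:ℝ) * t ∈ I → f ((n:ℝ) * t) = n * f t := by
  intro n
  induction n with
  | zero => intro t _ _ _; simpa using f0
  | succ n ih =>
    intro t ht htI hntI
    push_cast at hntI ⊢
    have hmem : (n:ℝ) * t ∈ I := by
      apply hI.out hntI h0
      constructor
      · nlinarith
      · nlinarith
    have hsum : (n:ℝ) * t + t ∈ I := by convert hntI using 1; ring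
    have h1 := hadd ((n:ℝ)*t) hmem t htI hsum
    have h2 := ih t ht htI hmem
    have he : ((n:ℝ)+1) * t = (n:ℝ)*t + t := by ring
    rw [he, h1, h2]; ring

end aux

lemma cauchy_aux (I : Set ℝ) (hI : I.OrdConnected) (h0 : (0 : ℝ) ∈ I)
    (b : ℝ) (hb : b ∈ I) (hbpos : 0 < b) (f : ℝ → ℝ)
    (hadd : ∀ x ∈ I, ∀ x' ∈ I, x + x' ∈ I → f (x + x') = f x + f x')
    (hcont : ∃ a ∈ I, ContinuousWithinAt f I a) :
    ∃ c : ℝ, ∀ x ∈ I, f x = c * x := by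
  have f0 : f 0 = 0 := by have h := hadd 0 h0 0 h0 (by simpa using h0); rw [add_zero] at h; linarith
  have hIcc : Set.Icc (0:ℝ) b ⊆ I := hI.out h0 hb
  -- right continuity at 0
  have key0 : Filter.Tendsto f (nhdsWithin 0 (Set.Ioc 0 b)) (nhds 0) := by
    obtain ⟨a, ha, hca⟩ := hcont
    have hsubIoc : Set.Ioc (0:ℝ) b ⊆ I := fun y hy => hIcc ⟨hy.1.le, hy.2⟩
    rcases lt_trichotomy a 0 with hal | hae | hag
    · -- a < 0 : f h = f (a+h) - f a for small h > 0
      have t1 : Filter.Tendsto (fun h => a + h) (nhdsWithin 0 (Set.Ioc 0 b)) (nhdsWithin a I) := by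
        rw [tendsto_nhdsWithin_iff]
        constructor
        · have : Filter.Tendsto (fun h : ℝ => a + h) (nhds 0) (nhds a) := by
            simpa using (tendsto_const_nhds.add Filter.tendsto_id : Filter.Tendsto (fun h:ℝ => a + h) (nhds 0) (nhds (a + 0)))
          exact this.mono_left nhdsWithin_le_nhds
        · have hev1 : ∀ᶠ h in nhdsWithin 0 (Set.Ioc 0 b), h ∈ Set.Ioc 0 b := self_mem_nhdsWithin
          have hev2 : ∀ᶠ h in nhdsWithin 0 (Set.Ioc 0 b), h < -a := by
            apply Filter.Eventually.filter_mono nhdsWithin_le_nhds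
            exact eventually_lt_nhds (by linarith)
          filter_upwards [hev1, hev2] with h h1 h2
          exact hI.out ha h0 ⟨by linarith [h1.1], by linarith⟩
      have t2 : Filter.Tendsto (fun h => f (a + h) - f a) (nhdsWithin 0 (Set.Ioc 0 b)) (nhds 0) := by
        have := (Filter.Tendsto.comp (hca : Filter.Tendsto f (nhdsWithin a I) (nhds (f a))) t1).sub (tendsto_const_nhds (x := f a))
        simpa using this
      apply t2.congr'
      have hev1 : ∀ᶠ h in nhdsWithin 0 (Set.Ioc 0 b), h ∈ Set.Ioc 0 b := self_mem_nhdsWithin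
      have hev2 : ∀ᶠ h in nhdsWithin 0 (Set.Ioc 0 b), h < -a :=
        Filter.Eventually.filter_mono nhdsWithin_le_nhds (eventually_lt_nhds (by linarith))
      filter_upwards [hev1, hev2] with h h1 h2
      have hmem : a + h ∈ I := hI.out ha h0 ⟨by linarith [h1.1], by linarith⟩
      have := hadd a ha h (hsubIoc h1) hmem
      rw [this]; ring
    · subst hae
      have hca' : Filter.Tendsto f (nhdsWithin 0 I) (nhds (f 0)) := hca
      rw [f0] at hca'
      exact hca'.mono_left (nhdsWithin_mono 0 hsubIoc)
    · -- a > 0 : f h = f a - f (a - h) for small h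
      have t1 : Filter.Tendsto (fun h => a - h) (nhdsWithin 0 (Set.Ioc 0 b)) (nhdsWithin a I) := by
        rw [tendsto_nhdsWithin_iff]
        constructor
        · have : Filter.Tendsto (fun h : ℝ => a - h) (nhds 0) (nhds a) := by
            simpa using (tendsto_const_nhds.sub Filter.tendsto_id : Filter.Tendsto (fun h:ℝ => a - h) (nhds 0) (nhds (a - 0)))
          exact this.mono_left nhdsWithin_le_nhds
        · have hev1 : ∀ᶠ h in nhdsWithin 0 (Set.Ioc 0 b), h ∈ Set.Ioc 0 b := self_mem_nhdsWithin
          have hev2 : ∀ᶠ h in nhdsWithin 0 (Set.Ioc 0 b), h < a :=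
            Filter.Eventually.filter_mono nhdsWithin_le_nhds (eventually_lt_nhds hag)
          filter_upwards [hev1, hev2] with h h1 h2
          exact hI.out h0 ha ⟨by linarith, by linarith [h1.1]⟩
      have t2 : Filter.Tendsto (fun h => f a - f (a - h)) (nhdsWithin 0 (Set.Ioc 0 b)) (nhds 0) := by
        have := (tendsto_const_nhds (x := f a)).sub (Filter.Tendsto.comp (hca : Filter.Tendsto f (nhdsWithin a I) (nhds (f a))) t1)
        simpa using this
      apply t2.congr'
      have hev1 : ∀ᶠ h in nhdsWithin 0 (Set.Ioc 0 b), h ∈ Set.Ioc 0 b := self_mem_nhdsWithin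
      have hev2 : ∀ᶠ h in nhdsWithin 0 (Set.Ioc 0 b), h < a :=
        Filter.Eventually.filter_mono nhdsWithin_le_nhds (eventually_lt_nhds hag)
      filter_upwards [hev1, hev2] with h h1 h2
      have hmem : a - h ∈ I := hI.out h0 ha ⟨by linarith, by linarith [h1.1]⟩
      have := hadd (a - h) hmem h (hsubIoc h1) (by simpa using ha)
      have h3 : a - h + h = a := by ring
      rw [h3] at this
      linarith
  -- rational scaling on [0, b]
  have ratmul : ∀ q : ℚ, 0 ≤ q → q ≤ 1 → f ((q:ℝ) * b) = (q:ℝ) * f b := by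
    intro q hq hq1
    set m : ℕ := q.num.toNat with hm
    set n : ℕ := q.den with hn
    have hnpos : 0 < (n:ℝ) := by positivity
    have hnum : ((m:ℕ):ℝ) = ((q.num : ℤ):ℝ) := by
      rw [hm]
      exact_mod_cast Int.toNat_of_nonneg (Rat.num_nonneg.mpr hq)
    have hqm : (q:ℝ) = (m:ℝ) / (n:ℝ) := by
      rw [Rat.cast_def, ← hnum, hn]
    have hq1' : (m:ℝ) ≤ (n:ℝ) := by
      have : (q:ℝ) ≤ 1 := by exact_mod_cast hq1
      rw [hqm] at this
      calc (m:ℝ) = (m:ℝ)/(n:ℝ) * n := by field_simp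
        _ ≤ 1 * n := by nlinarith
        _ = n := by ring
    set t : ℝ := b / n with ht
    have htpos : 0 < t := by positivity
    have htle : t ≤ b := by
      rw [ht, div_le_iff₀ hnpos]
      have hd : 1 ≤ n := q.pos
      have : (1:ℝ) ≤ n := by exact_mod_cast hd
      nlinarith
    have htI : t ∈ I := hIcc ⟨htpos.le, htle⟩
    have hnt : (n:ℝ) * t = b := by rw [ht]; field_simp
    have hmtI : (m:ℝ) * t ∈ I := by
      apply hIcc
      constructor
      · positivity
      · nlinarith
    have h1 : f ((n:ℝ) * t) = n * f t :=
      natmul_nonneg I f hI h0 hadd f0 n t htpos.le htI (by rw [hnt]; exact hb)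
    have h2 : f ((m:ℝ) * t) = m * f t :=
      natmul_nonneg I f hI h0 hadd f0 m t htpos.le htI hmtI
    rw [hnt] at h1
    have hft : f t = f b / n := by rw [h1, mul_div_cancel_left₀ _ (ne_of_gt hnpos)]
    have heq : (q:ℝ) * b = (m:ℝ) * t := by rw [hqm, ht]; field_simp
    rw [heq, h2, hft, hqm]
    field_simp
  -- f x = (f b / b) * x on (0, b]
  set c : ℝ := f b / b with hc
  have flin : ∀ x : ℝ, 0 < x → x ≤ b → f x = c * x := by
    intro x hx hxb
    have hxbb : x / b ≤ 1 := by rw [div_le_one hbpos]; exact hxb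
    have hxbpos : 0 < x / b := by positivity
    -- choose rationals qₙ with x/b - 1/(n+1) < qₙ < x/b, qₙ > 0
    have hex : ∀ k : ℕ, ∃ q : ℚ, max 0 (x/b - 1/(k+1)) < (q:ℝ) ∧ (q:ℝ) < x/b := by
      intro k
      apply exists_rat_btwn
      apply max_lt hxbpos
      have : (0:ℝ) < 1/(k+1) := by positivity
      linarith
    choose q hq1 hq2 using hex
    have hqpos : ∀ k, 0 < (q k : ℝ) := fun k => lt_of_le_of_lt (le_max_left _ _) (hq1 k)
    have hqle1 : ∀ k, (q k : ℝ) ≤ 1 := fun k => le_of_lt (lt_of_lt_of_le (hq2 k) hxbb)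
    set r : ℕ → ℝ := fun k => x - (q k : ℝ) * b with hr
    have hrpos : ∀ k, 0 < r k := by
      intro k
      have := hq2 k
      have : (q k : ℝ) * b < x := by
        calc (q k : ℝ) * b < (x/b) * b := by nlinarith [hq2 k]
          _ = x := by field_simp
      simp only [hr]; linarith
    have hrle : ∀ k, r k ≤ b := by
      intro k
      have : 0 ≤ (q k:ℝ) * b := mul_nonneg (hqpos k).le hbpos.le
      simp only [hr]; linarith
    have hfx : ∀ k, f x = (q k : ℝ) * f b + f (r k) := by
      intro k
      have hqbI : (q k:ℝ) * b ∈ I := by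
        apply hIcc
        constructor
        · exact mul_nonneg (hqpos k).le hbpos.le
        · nlinarith [hqle1 k]
      have hrI : r k ∈ I := hIcc ⟨(hrpos k).le, hrle k⟩
      have hsum : (q k:ℝ) * b + r k ∈ I := by
        have : (q k:ℝ) * b + r k = x := by simp [hr]
        rw [this]; exact hIcc ⟨hx.le, hxb⟩
      have := hadd ((q k:ℝ)*b) hqbI (r k) hrI hsum
      have hxeq : x = (q k:ℝ) * b + r k := by simp [hr]
      rw [← hxeq] at this
      rw [this, ratmul (q k) (by exact_mod_cast (hqpos k).le) (by exact_mod_cast hqle1 k)]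
    -- limits
    have hqtend : Filter.Tendsto (fun k => (q k : ℝ)) Filter.atTop (nhds (x/b)) := by
      apply tendsto_of_tendsto_of_tendsto_of_le_of_le
        (g := fun k : ℕ => x/b - 1/(k+1)) (h := fun _ => x/b)
      · have h1 : Filter.Tendsto (fun k : ℕ => 1/((k:ℝ)+1)) Filter.atTop (nhds 0) :=
          tendsto_one_div_add_atTop_nhds_zero_nat
        have := (tendsto_const_nhds (x := x/b) (f := Filter.atTop (α := ℕ))).sub h1
        simpa using this
      · exact tendsto_const_nhds
      · intro k; exact (lt_of_le_of_lt (le_max_right _ _) (hq1 k)).le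
      · intro k; exact (hq2 k).le
    have hrtend : Filter.Tendsto r Filter.atTop (nhdsWithin 0 (Set.Ioc 0 b)) := by
      rw [tendsto_nhdsWithin_iff]
      constructor
      · have : Filter.Tendsto r Filter.atTop (nhds (x - (x/b) * b)) := by
          apply Filter.Tendsto.sub tendsto_const_nhds
          exact hqtend.mul tendsto_const_nhds
        have hxx : x - (x/b)*b = 0 := by field_simp; ring
        rwa [hxx] at this
      · exact Filter.Eventually.of_forall (fun k => ⟨hrpos k, hrle k⟩)
    have hfrtend : Filter.Tendsto (fun k => f (r k)) Filter.atTop (nhds 0) :=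
      key0.comp hrtend
    have hmain : Filter.Tendsto (fun k => (q k : ℝ) * f b + f (r k)) Filter.atTop
        (nhds ((x/b) * f b + 0)) :=
      (hqtend.mul tendsto_const_nhds).add hfrtend
    have : Filter.Tendsto (fun _ : ℕ => f x) Filter.atTop (nhds ((x/b) * f b + 0)) := by
      apply hmain.congr
      intro k; exact (hfx k).symm
    have hfxeq := tendsto_nhds_unique this tendsto_const_nhds
    rw [← hfxeq, hc]
    field_simp; ring
  refine ⟨c, fun x hx => ?_⟩
  rcases lt_trichotomy x 0 with hxneg | hxz | hxpos
  · -- negative case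
    set n : ℕ := ⌈(-x) / b⌉₊ with hn
    have hn1 : 1 ≤ n := by
      rw [hn]
      exact Nat.one_le_ceil_iff.mpr (div_pos (by linarith) hbpos)
    have hnR : (1:ℝ) ≤ n := by exact_mod_cast hn1
    have hnpos : (0:ℝ) < n := by linarith
    have hceil : (-x) / b ≤ n := Nat.le_ceil _
    set t : ℝ := x / n with ht
    have htneg : t < 0 := div_neg_of_neg_of_pos hxneg hnpos
    have htgeb : -b ≤ t := by
      rw [ht, le_div_iff₀ hnpos]
      have : -x ≤ n * b := by
        calc -x = ((-x)/b) * b := by field_simp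
          _ ≤ n * b := by nlinarith
      nlinarith
    have htgex : x ≤ t := by
      rw [ht, le_div_iff₀ hnpos]
      nlinarith
    have htI : t ∈ I := hI.out hx h0 ⟨htgex, htneg.le⟩
    have hmtI : -t ∈ I := hIcc ⟨by linarith, by linarith⟩
    have hft : f t = c * t := by
      have hsum := hadd t htI (-t) hmtI (by simpa using h0)
      rw [add_neg_cancel, f0] at hsum
      have := flin (-t) (by linarith) (by linarith)
      linarith [this]
      -- f t = - f (-t) = -(c * (-t)) = c * t
    have hnt : (n:ℝ) * t = x := by rw [ht]; field_simp
    have := natmul_nonpos I f hI h0 hadd f0 n t htneg.le htI (by rw [hnt]; exact hx)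
    rw [hnt] at this
    rw [this, hft, ← hnt]
    ring
  · simp [hxz, f0]
  · -- positive case
    set n : ℕ := ⌈x / b⌉₊ with hn
    have hn1 : 1 ≤ n := by
      rw [hn]
      exact Nat.one_le_ceil_iff.mpr (by positivity)
    have hnR : (1:ℝ) ≤ n := by exact_mod_cast hn1
    have hceil : x / b ≤ n := Nat.le_ceil _
    set t : ℝ := x / n with ht
    have htpos : 0 < t := by positivity
    have htleb : t ≤ b := by
      rw [ht, div_le_iff₀ (by positivity)]
      calc x = (x/b) * b := by field_simp
        _ ≤ n * b := by nlinarith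
        _ = b * n := by ring
    have htlex : t ≤ x := by
      rw [ht, div_le_iff₀ (by positivity)]
      nlinarith
    have htI : t ∈ I := hI.out h0 hx ⟨htpos.le, htlex⟩
    have hnt : (n:ℝ) * t = x := by rw [ht]; field_simp
    have := natmul_nonneg I f hI h0 hadd f0 n t htpos.le htI (by rw [hnt]; exact hx)
    rw [hnt] at this
    rw [this, flin t htpos htleb, ← hnt]
    ring


/-- If `f : I → ℝ` solves the restricted Cauchy equation and is
continuous at a point of `I`, then `f(x) = c·x` on `I`. -/
theorem cauchy_interval_continuousAt (I : Set ℝ) (hI : I.OrdConnected)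
    (h0 : (0 : ℝ) ∈ I) (hnt : ∃ x ∈ I, x ≠ 0) (f : ℝ → ℝ)
    (hadd : ∀ x ∈ I, ∀ x' ∈ I, x + x' ∈ I → f (x + x') = f x + f x')
    (hcont : ∃ a ∈ I, ContinuousWithinAt f I a) :
    ∃ c : ℝ, ∀ x ∈ I, f x = c * x := by
  obtain ⟨x0, hx0, hx0ne⟩ := hnt
  rcases hx0ne.lt_or_gt with hneg | hpos
  · -- reflect
    set J : Set ℝ := (fun y : ℝ => -y) ⁻¹' I with hJ
    have hJmem : ∀ y : ℝ, y ∈ J ↔ -y ∈ I := fun y => Iff.rfl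
    have hJord : J.OrdConnected := by
      constructor
      intro u hu v hv w hw
      have : -w ∈ Set.Icc (-v) (-u) := ⟨by simpa using hw.2, by simpa using hw.1⟩
      exact hI.out hv hu this
    have h0J : (0:ℝ) ∈ J := by simpa [hJmem] using h0
    have hx0J : -x0 ∈ J := by simp [hJmem]; exact hx0
    have haddJ : ∀ y ∈ J, ∀ y' ∈ J, y + y' ∈ J → f (-(y + y')) = f (-y) + f (-y') := by
      intro y hy y' hy' hsum
      have : -(y + y') = -y + -y' := by ring
      rw [this]
      exact hadd (-y) hy (-y') hy' (by rw [← this]; exact hsum)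
    have hcontJ : ∃ a ∈ J, ContinuousWithinAt (fun y => f (-y)) J a := by
      obtain ⟨a, ha, hca⟩ := hcont
      refine ⟨-a, by simpa [hJmem] using ha, ?_⟩
      have hca' : ContinuousWithinAt f I (-(-a)) := by rwa [neg_neg]
      exact hca'.comp continuous_neg.continuousWithinAt (fun y hy => hy)
    obtain ⟨c, hc⟩ := cauchy_aux J hJord h0J (-x0) hx0J (by linarith)
      (fun y => f (-y)) haddJ hcontJ
    refine ⟨-c, fun x hx => ?_⟩
    have hxJ : -x ∈ J := by simp [hJmem]; exact hx
    have := hc (-x) hxJ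
    simp only [neg_neg] at this
    rw [this]; ring
  · exact cauchy_aux I hI h0 x0 hx0 hpos f hadd hcont
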